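/- Let t₂, …, t_{n−1} and t′₂, …, t′_{n−1} be two families of elements of G with tᵢ² = 1 and (t′ᵢ)² = 1 for all i, and with t_{n−1} = t′_{n−1}. If the associated elements satisfy f_{n−2} = f′_{n−2} and fᵢ = f′ᵢ for all 2 ≤ i ≤ n−3 (where f′ᵢ is defined from the family t′ by the same formulas as fᵢ is from t), then tᵢ = t′ᵢ for all 2 ≤ i ≤ n−1. Explicitly, each tᵢ is recovered as tᵢ = (t_{n−1}·t_{n−2} ⋯ t_{i+1})⁻¹·fᵢ·(t_{i+1} ⋯ t_{n−3}·t_{n−2})⁻¹. -/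

import Mathlib

/-- Let `n ≥ 6` be even and `G` a group.  Let `t 2, …, t (n-1)` and
`t' 2, …, t' (n-1)` be two families of involutions in `G` with `t (n-1) = t' (n-1)`, and
let `f` (resp. `f'`) be defined from `t` (resp. `t'`) by
`f i = t (n-1) ⋯ t (i+1) * t i * t (i+1) ⋯ t (n-2)` for `2 ≤ i ≤ n-3` and
`f (n-2) = t (n-1) * t (n-2)`.  If `f (n-2) = f' (n-2)` and `f i = f' i` for all
`2 ≤ i ≤ n-3`, then `t i = t' i` for all `2 ≤ i ≤ n-1`; explicitly, each `t i` is
recovered as `t i = (t (n-1) ⋯ t (i+1))⁻¹ * f i * (t (i+1) ⋯ t (n-2))⁻¹`. -/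
theorem t_determined_by_f {G : Type*} [Group G] (n : ℕ) (hn : 6 ≤ n) (hEven : Even n)
    (t t' f f' : ℕ → G)
    (ht : ∀ i, 2 ≤ i → i ≤ n - 1 → t i * t i = 1)
    (ht' : ∀ i, 2 ≤ i → i ≤ n - 1 → t' i * t' i = 1)
    (htop : t (n - 1) = t' (n - 1))
    (hfi : ∀ i, 2 ≤ i → i ≤ n - 3 →
      f i = ((List.range' (i + 1) (n - 1 - i)).reverse.map t).prod * t i *
        ((List.range' (i + 1) (n - 2 - i)).map t).prod)
    (hfn2 : f (n - 2) = t (n - 1) * t (n - 2))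
    (hfi' : ∀ i, 2 ≤ i → i ≤ n - 3 →
      f' i = ((List.range' (i + 1) (n - 1 - i)).reverse.map t').prod * t' i *
        ((List.range' (i + 1) (n - 2 - i)).map t').prod)
    (hfn2' : f' (n - 2) = t' (n - 1) * t' (n - 2))
    (heqn2 : f (n - 2) = f' (n - 2))
    (heq : ∀ i, 2 ≤ i → i ≤ n - 3 → f i = f' i) :
    (∀ i, 2 ≤ i → i ≤ n - 1 → t i = t' i) ∧
    (∀ i, 2 ≤ i → i ≤ n - 2 →
      t i = (((List.range' (i + 1) (n - 1 - i)).reverse.map t).prod)⁻¹ * f i *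
        (((List.range' (i + 1) (n - 2 - i)).map t).prod)⁻¹) := by
  constructor
  · have key : ∀ d i, 2 ≤ i → i ≤ n - 1 → n - 1 - i ≤ d → t i = t' i := by
      intro d
      induction d with
      | zero =>
        intro i h2 hle hd
        have : i = n - 1 := by omega
        rw [this]; exact htop
      | succ d ih =>
        intro i h2 hle hd
        by_cases hcase : n - 1 - i ≤ d
        · exact ih i h2 hle hcase
        · by_cases h3 : i ≤ n - 3
          · have hmap1 : (List.range' (i + 1) (n - 1 - i)).reverse.map t
                = (List.range' (i + 1) (n - 1 - i)).reverse.map t' := by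
              apply List.map_congr_left
              intro j hj
              rw [List.mem_reverse, List.mem_range'] at hj
              exact ih j (by omega) (by omega) (by omega)
            have hmap2 : (List.range' (i + 1) (n - 2 - i)).map t
                = (List.range' (i + 1) (n - 2 - i)).map t' := by
              apply List.map_congr_left
              intro j hj
              rw [List.mem_range'] at hj
              exact ih j (by omega) (by omega) (by omega)
            have h := heq i h2 h3
            rw [hfi i h2 h3, hfi' i h2 h3, hmap1, hmap2] at h
            exact mul_left_cancel (mul_right_cancel h)
          · have hieq : i = n - 2 := by omega
            have h := heqn2
            rw [hfn2, hfn2', htop] at h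
            rw [hieq]
            exact mul_left_cancel h
    exact fun i h2 hle => key (n - 1 - i) i h2 hle le_rfl
  · intro i h2 hle
    by_cases h3 : i ≤ n - 3
    · rw [hfi i h2 h3]; group
    · have hieq : i = n - 2 := by omega
      rw [hieq, show n - 2 + 1 = n - 1 from by omega,
        show n - 1 - (n - 2) = 1 from by omega,
        show n - 2 - (n - 2) = 0 from by omega, hfn2]
      simp [List.range']
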